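/- Let m ≥ 2, α > 1/2, and let Ŷ ∈ ℝ^{n×m} admit the decomposition Ŷ = Σ_{k=1}^L σ_k p_k q_kᵀ where σ_1 > 0, σ_k ≥ 0, ‖p_k‖ = 1 and ‖q_k‖ = 1 for all k, and where q_1 = r/‖r‖ with r satisfying the power law r_g = r_max · g^(−α), r_max > 0. If a row index u satisfies p_{1u} ≥ 0 and σ_1 · p_{1u} · (1 − 2^(−α))/√ζ(2α) > √2 · Σ_{k=2}^L σ_k, then Ŷ_{u1} > Ŷ_{ui} for every i ∈ {2,…,m}. -/

import Mathlib

open Finset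

/-- Riemann zeta function for real `s > 1`: `ζ(s) = ∑_{j=1}^∞ j^(−s)`. -/
noncomputable def zetaR (s : ℝ) : ℝ := ∑' j : ℕ, ((j : ℝ) + 1) ^ (-s)

/-- Euclidean (L2) norm of a vector. -/
noncomputable def l2enorm {k : ℕ} (v : Fin k → ℝ) : ℝ := Real.sqrt (∑ i, v i ^ 2)

lemma summable_aux {s : ℝ} (hs : 1 < s) :
    Summable (fun j : ℕ => ((j : ℝ) + 1) ^ (-s)) := by
  have h : Summable (fun j : ℕ => ((j : ℝ)) ^ (-s)) := by
    rw [Real.summable_nat_rpow]; linarith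
  have h2 := (summable_nat_add_iff 1).mpr h
  simpa using h2

lemma zeta_ge_one {s : ℝ} (hs : 1 < s) : 1 ≤ zetaR s := by
  have h := Summable.le_tsum (summable_aux hs) 0
    (fun j _ => Real.rpow_nonneg (by positivity) _)
  simpa [zetaR] using h

lemma partial_le_zeta {s : ℝ} (hs : 1 < s) (m : ℕ) :
    ∑ j ∈ Finset.range m, ((j : ℝ) + 1) ^ (-s) ≤ zetaR s :=
  Summable.sum_le_tsum _ (fun j _ => Real.rpow_nonneg (by positivity) _) (summable_aux hs)

/-- Let `m ≥ 2`, `α > 1/2`, and let `Ŷ = Σ_{k=1}^L σ_k p_k q_kᵀ`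
with `σ_1 > 0`, `σ_k ≥ 0`, unit vectors `p_k, q_k`, and `q_1 = r/‖r‖` with `r` a
power-law vector.  If a row `u` satisfies `p_{1u} ≥ 0` and
`σ_1 · p_{1u} · (1 − 2^(−α))/√ζ(2α) > √2 · Σ_{k=2}^L σ_k`, then the most popular item
(index `1`, Fin-index `0`) is the strict top-1 of row `u`: `Ŷ_{u1} > Ŷ_{ui}` for all
`i ∈ {2,…,m}`. -/
theorem top1_sufficient_condition
    (n m L : ℕ) (hm : 2 ≤ m) (hL : 0 < L)
    (α rmax : ℝ) (hα : 1 / 2 < α) (hrmax : 0 < rmax)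
    (r : Fin m → ℝ) (hpow : ∀ g : Fin m, r g = rmax * (((g : ℕ) : ℝ) + 1) ^ (-α))
    (σ : Fin L → ℝ) (p : Fin L → Fin n → ℝ) (q : Fin L → Fin m → ℝ)
    (hσ1 : 0 < σ ⟨0, hL⟩) (hσnn : ∀ k, 0 ≤ σ k)
    (hp : ∀ k, l2enorm (p k) = 1) (hq : ∀ k, l2enorm (q k) = 1)
    (hq1 : q ⟨0, hL⟩ = fun i => r i / l2enorm r)
    (Yhat : Matrix (Fin n) (Fin m) ℝ)
    (hYhat : ∀ u i, Yhat u i = ∑ k, σ k * p k u * q k i)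
    (u : Fin n) (hu : 0 ≤ p ⟨0, hL⟩ u)
    (hcond : Real.sqrt 2 * ∑ k ∈ Finset.univ.filter (fun k : Fin L => k ≠ ⟨0, hL⟩), σ k
      < σ ⟨0, hL⟩ * p ⟨0, hL⟩ u * ((1 - (2 : ℝ) ^ (-α)) / Real.sqrt (zetaR (2 * α)))) :
    ∀ i : Fin m, (i : ℕ) ≠ 0 → Yhat u i < Yhat u ⟨0, by omega⟩ := by
  intro i hi
  have hm0 : 0 < m := by omega
  set k0 : Fin L := ⟨0, hL⟩ with hk0def
  set i0 : Fin m := ⟨0, hm0⟩ with hi0def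
  have hα0 : (0:ℝ) < α := by linarith
  have hs : (1:ℝ) < 2 * α := by linarith
  -- zeta facts
  have hζ1 : (1:ℝ) ≤ zetaR (2 * α) := zeta_ge_one hs
  have hζpos : (0:ℝ) < zetaR (2 * α) := by linarith
  have hsqζ1 : (1:ℝ) ≤ Real.sqrt (zetaR (2 * α)) := by
    rw [show (1:ℝ) = Real.sqrt 1 by simp]
    exact Real.sqrt_le_sqrt hζ1
  have hsqζpos : (0:ℝ) < Real.sqrt (zetaR (2 * α)) := by linarith
  -- the key exponent identity
  have hterm : ∀ x : ℝ, 0 < x → (x ^ (-α)) ^ 2 = x ^ (-(2*α)) := by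
    intro x hx
    rw [← Real.rpow_natCast (x ^ (-α)) 2, ← Real.rpow_mul hx.le]
    norm_num
    ring_nf
  -- sum of squares of r
  have hS : ∑ g : Fin m, r g ^ 2
      = rmax ^ 2 * ∑ j ∈ Finset.range m, ((j : ℝ) + 1) ^ (-(2*α)) := by
    rw [Finset.mul_sum, ← Fin.sum_univ_eq_sum_range
      (fun j : ℕ => rmax ^ 2 * ((j : ℝ) + 1) ^ (-(2*α)))]
    apply Finset.sum_congr rfl
    intro g _
    rw [hpow g, mul_pow, hterm _ (by positivity)]
  -- bounds on enorm r
  have hRle : l2enorm r ≤ rmax * Real.sqrt (zetaR (2 * α)) := by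
    unfold l2enorm
    rw [hS]
    have h1 : rmax ^ 2 * ∑ j ∈ Finset.range m, ((j : ℝ) + 1) ^ (-(2*α))
        ≤ rmax ^ 2 * zetaR (2 * α) :=
      mul_le_mul_of_nonneg_left (partial_le_zeta hs m) (sq_nonneg _)
    calc Real.sqrt (rmax ^ 2 * ∑ j ∈ Finset.range m, ((j : ℝ) + 1) ^ (-(2*α)))
        ≤ Real.sqrt (rmax ^ 2 * zetaR (2 * α)) := Real.sqrt_le_sqrt h1
      _ = rmax * Real.sqrt (zetaR (2 * α)) := by
          rw [Real.sqrt_mul (sq_nonneg _), Real.sqrt_sq hrmax.le]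
  have hri0 : r i0 = rmax := by
    have := hpow i0
    simp [hi0def] at this
    simpa using this
  have hRpos : 0 < l2enorm r := by
    unfold l2enorm
    apply Real.sqrt_pos.mpr
    apply Finset.sum_pos' (fun g _ => sq_nonneg _)
    exact ⟨i0, Finset.mem_univ _, by rw [hri0]; positivity⟩
  -- bound on r i
  have hx2 : (2:ℝ) ≤ ((i : ℕ) : ℝ) + 1 := by
    have : 1 ≤ (i : ℕ) := Nat.one_le_iff_ne_zero.mpr hi
    have : (1:ℝ) ≤ ((i : ℕ) : ℝ) := by exact_mod_cast this
    linarith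
  have hrpowle : (((i : ℕ) : ℝ) + 1) ^ (-α) ≤ (2:ℝ) ^ (-α) := by
    rw [Real.rpow_neg (by positivity), Real.rpow_neg (by norm_num)]
    apply inv_anti₀ (by positivity)
    exact Real.rpow_le_rpow (by norm_num) hx2 hα0.le
  have hri : r i ≤ rmax * (2:ℝ) ^ (-α) := by
    rw [hpow i]
    exact mul_le_mul_of_nonneg_left hrpowle hrmax.le
  have hc1 : (0:ℝ) ≤ 1 - (2:ℝ) ^ (-α) := by
    have : (2:ℝ) ^ (-α) ≤ 1 :=
      Real.rpow_le_one_of_one_le_of_nonpos (by norm_num) (by linarith)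
    linarith
  -- the main gap for the first component
  have hΔ1 : (1 - (2:ℝ) ^ (-α)) / Real.sqrt (zetaR (2 * α)) ≤ q k0 i0 - q k0 i := by
    rw [hq1]
    have h1 : rmax * (1 - (2:ℝ) ^ (-α)) ≤ r i0 - r i := by
      rw [hri0]; nlinarith
    have h2 : (rmax * (1 - (2:ℝ) ^ (-α))) / (rmax * Real.sqrt (zetaR (2 * α)))
        ≤ (rmax * (1 - (2:ℝ) ^ (-α))) / l2enorm r :=
      div_le_div_of_nonneg_left (by positivity) hRpos hRle
    have h3 : (rmax * (1 - (2:ℝ) ^ (-α))) / (rmax * Real.sqrt (zetaR (2 * α)))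
        = (1 - (2:ℝ) ^ (-α)) / Real.sqrt (zetaR (2 * α)) := by
      rw [mul_div_mul_left _ _ (ne_of_gt hrmax)]
    calc (1 - (2:ℝ) ^ (-α)) / Real.sqrt (zetaR (2 * α))
        = (rmax * (1 - (2:ℝ) ^ (-α))) / (rmax * Real.sqrt (zetaR (2 * α))) := h3.symm
      _ ≤ (rmax * (1 - (2:ℝ) ^ (-α))) / l2enorm r := h2
      _ ≤ (r i0 - r i) / l2enorm r := by gcongr
      _ = r i0 / l2enorm r - r i / l2enorm r := sub_div _ _ _
  -- unit-norm consequences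
  have hpnorm : ∀ k, |p k u| ≤ 1 := by
    intro k
    have h1 : ∑ v, p k v ^ 2 = 1 := by
      have := hp k
      unfold l2enorm at this
      rwa [Real.sqrt_eq_one] at this
    have h2 : p k u ^ 2 ≤ 1 := h1 ▸
      Finset.single_le_sum (f := fun v => p k v ^ 2) (fun v _ => sq_nonneg _)
        (Finset.mem_univ u)
    exact (sq_le_one_iff_abs_le_one _).mp h2
  have hqdiff : ∀ k, |q k i0 - q k i| ≤ Real.sqrt 2 := by
    intro k
    have h1 : ∑ v, q k v ^ 2 = 1 := by
      have := hq k
      unfold l2enorm at this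
      rwa [Real.sqrt_eq_one] at this
    have hne : i0 ≠ i := by
      intro h
      exact hi (by rw [← h])
    have hpair : q k i0 ^ 2 + q k i ^ 2 ≤ 1 := by
      calc q k i0 ^ 2 + q k i ^ 2 = ∑ v ∈ ({i0, i} : Finset (Fin m)), q k v ^ 2 := by
            rw [Finset.sum_pair hne]
        _ ≤ ∑ v, q k v ^ 2 := Finset.sum_le_sum_of_subset_of_nonneg
            (Finset.subset_univ _) (fun _ _ _ => sq_nonneg _)
        _ = 1 := h1
    have h2 : (q k i0 - q k i) ^ 2 ≤ 2 := by nlinarith [sq_nonneg (q k i0 + q k i)]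
    rw [← Real.sqrt_sq_eq_abs]
    exact Real.sqrt_le_sqrt h2
  have habs : ∀ k, |σ k * p k u * (q k i0 - q k i)| ≤ σ k * Real.sqrt 2 := by
    intro k
    calc |σ k * p k u * (q k i0 - q k i)|
        = σ k * (|p k u| * |q k i0 - q k i|) := by
          rw [abs_mul, abs_mul, abs_of_nonneg (hσnn k), mul_assoc]
      _ ≤ σ k * (1 * Real.sqrt 2) :=
          mul_le_mul_of_nonneg_left
            (mul_le_mul (hpnorm k) (hqdiff k) (abs_nonneg _) zero_le_one) (hσnn k)
      _ = σ k * Real.sqrt 2 := by ring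
  -- sum decomposition
  have hdiff : Yhat u i0 - Yhat u i = ∑ k, σ k * p k u * (q k i0 - q k i) := by
    rw [hYhat, hYhat, ← Finset.sum_sub_distrib]
    exact Finset.sum_congr rfl (fun k _ => by ring)
  have hsplit : ∑ k, σ k * p k u * (q k i0 - q k i)
      = σ k0 * p k0 u * (q k0 i0 - q k0 i)
        + ∑ k ∈ Finset.univ.erase k0, σ k * p k u * (q k i0 - q k i) :=
    (Finset.add_sum_erase _ _ (Finset.mem_univ k0)).symm
  have hhead : σ k0 * p k0 u * ((1 - (2:ℝ) ^ (-α)) / Real.sqrt (zetaR (2 * α)))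
      ≤ σ k0 * p k0 u * (q k0 i0 - q k0 i) :=
    mul_le_mul_of_nonneg_left hΔ1 (mul_nonneg hσ1.le hu)
  have htail : -(Real.sqrt 2 * ∑ k ∈ Finset.univ.erase k0, σ k)
      ≤ ∑ k ∈ Finset.univ.erase k0, σ k * p k u * (q k i0 - q k i) := by
    have h1 : ∑ k ∈ Finset.univ.erase k0, (-(Real.sqrt 2 * σ k))
        ≤ ∑ k ∈ Finset.univ.erase k0, σ k * p k u * (q k i0 - q k i) := by
      apply Finset.sum_le_sum
      intro k _
      have h2 := neg_abs_le (σ k * p k u * (q k i0 - q k i))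
      have h3 := habs k
      nlinarith [Real.sqrt_nonneg 2]
    calc -(Real.sqrt 2 * ∑ k ∈ Finset.univ.erase k0, σ k)
        = ∑ k ∈ Finset.univ.erase k0, (-(Real.sqrt 2 * σ k)) := by
          rw [Finset.mul_sum, ← Finset.sum_neg_distrib]
      _ ≤ _ := h1
  have hfe : Finset.univ.filter (fun k : Fin L => k ≠ k0) = Finset.univ.erase k0 :=
    Finset.filter_ne' _ _
  rw [hfe] at hcond
  have hfinal : 0 < Yhat u i0 - Yhat u i := by
    rw [hdiff, hsplit]
    linarith
  have : Yhat u i < Yhat u i0 := by linarith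
  exact this
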